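/- The maximal group of diagonal symmetries G_W of the two-dimensional loop potential W = X1^{a1} X2 + X2^{a2} X1 is a finite group of order a1*a2 − 1. -/

import Mathlib

noncomputable section

/-- The maximal group of diagonal symmetries of the two-dimensional loop
potential `W = X1^a1 * X2 + X2^a2 * X1`. -/
def loopSymGroup (a1 a2 : ℕ) : Subgroup (ℂˣ × ℂˣ) where
  carrier := {p | (p.1 : ℂ) ^ a1 * (p.2 : ℂ) = 1 ∧ (p.2 : ℂ) ^ a2 * (p.1 : ℂ) = 1}
  one_mem' := by simp
  mul_mem' := by
    rintro ⟨x1, x2⟩ ⟨y1, y2⟩ ⟨hx1, hx2⟩ ⟨hy1, hy2⟩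
    refine ⟨?_, ?_⟩
    · show ((x1 * y1 : ℂˣ) : ℂ) ^ a1 * ((x2 * y2 : ℂˣ) : ℂ) = 1
      push_cast
      rw [mul_pow]
      calc (x1:ℂ)^a1 * (y1:ℂ)^a1 * ((x2:ℂ) * (y2:ℂ))
          = ((x1:ℂ)^a1 * x2) * ((y1:ℂ)^a1 * y2) := by ring
        _ = 1 := by rw [hx1, hy1, one_mul]
    · show ((x2 * y2 : ℂˣ) : ℂ) ^ a2 * ((x1 * y1 : ℂˣ) : ℂ) = 1
      push_cast
      rw [mul_pow]
      calc (x2:ℂ)^a2 * (y2:ℂ)^a2 * ((x1:ℂ) * (y1:ℂ))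
          = ((x2:ℂ)^a2 * x1) * ((y2:ℂ)^a2 * y1) := by ring
        _ = 1 := by rw [hx2, hy2, one_mul]
  inv_mem' := by
    rintro ⟨x1, x2⟩ ⟨h1, h2⟩
    refine ⟨?_, ?_⟩
    · show ((x1⁻¹ : ℂˣ) : ℂ) ^ a1 * ((x2⁻¹ : ℂˣ) : ℂ) = 1
      rw [Units.val_inv_eq_inv_val, Units.val_inv_eq_inv_val, inv_pow, ← mul_inv, h1, inv_one]
    · show ((x2⁻¹ : ℂˣ) : ℂ) ^ a2 * ((x1⁻¹ : ℂˣ) : ℂ) = 1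
      rw [Units.val_inv_eq_inv_val, Units.val_inv_eq_inv_val, inv_pow, ← mul_inv, h2, inv_one]


/-- The maximal group of diagonal symmetries `G_W` of the two-dimensional loop
potential `W = X1^a1 * X2 + X2^a2 * X1` is a finite group of order `a1*a2 - 1`. -/

lemma loopSym_mem_units {a1 a2 : ℕ} {x y : ℂˣ} (h : (x, y) ∈ loopSymGroup a1 a2) :
    x ^ a1 * y = 1 ∧ y ^ a2 * x = 1 := by
  obtain ⟨h1, h2⟩ := h
  constructor <;> ext <;> push_cast <;> assumption

lemma loopSym_mem_of_units {a1 a2 : ℕ} {x y : ℂˣ} (h1 : x ^ a1 * y = 1)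
    (h2 : y ^ a2 * x = 1) : (x, y) ∈ loopSymGroup a1 a2 := by
  constructor
  · show ((x : ℂˣ) : ℂ) ^ a1 * ((y : ℂˣ) : ℂ) = 1
    calc ((x : ℂˣ) : ℂ) ^ a1 * ((y : ℂˣ) : ℂ) = ((x ^ a1 * y : ℂˣ) : ℂ) := by push_cast; ring
      _ = 1 := by rw [h1]; rfl
  · show ((y : ℂˣ) : ℂ) ^ a2 * ((x : ℂˣ) : ℂ) = 1
    calc ((y : ℂˣ) : ℂ) ^ a2 * ((x : ℂˣ) : ℂ) = ((y ^ a2 * x : ℂˣ) : ℂ) := by push_cast; ring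
      _ = 1 := by rw [h2]; rfl

lemma loopSym_snd_eq {a1 a2 : ℕ} {x y : ℂˣ} (h : (x, y) ∈ loopSymGroup a1 a2) :
    y = (x ^ a1)⁻¹ :=
  ((inv_eq_of_mul_eq_one_right (loopSym_mem_units h).1).symm)

lemma loopSym_fst_pow {a1 a2 : ℕ} (h1 : 1 ≤ a1 * a2) {x y : ℂˣ}
    (h : (x, y) ∈ loopSymGroup a1 a2) : x ^ (a1 * a2 - 1) = 1 := by
  have h2 := (loopSym_mem_units h).2
  rw [loopSym_snd_eq h, inv_pow, ← pow_mul] at h2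
  have key : x ^ (a1 * a2) = x := inv_mul_eq_one.mp h2
  have : x ^ (a1 * a2 - 1) * x = 1 * x := by
    rw [← pow_succ, Nat.sub_add_cancel h1, key, one_mul]
  exact mul_right_cancel this

/-- Key equivalence: the symmetry group is in bijection with `(a1*a2-1)`-th roots of unity. -/
def loopSymEquiv (a1 a2 : ℕ) (h1 : 1 ≤ a1 * a2) :
    loopSymGroup a1 a2 ≃ rootsOfUnity (a1 * a2 - 1) ℂ where
  toFun p := ⟨p.1.1, by
    obtain ⟨⟨x, y⟩, hp⟩ := p
    exact loopSym_fst_pow h1 hp⟩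
  invFun x := ⟨⟨x.1, (x.1 ^ a1)⁻¹⟩, by
    refine loopSym_mem_of_units (mul_inv_cancel _) ?_
    have hx : (x.1 : ℂˣ) ^ (a1 * a2 - 1) = 1 := x.2
    rw [inv_pow, ← pow_mul]
    have : (x.1 : ℂˣ) ^ (a1 * a2) = x.1 := by
      calc (x.1 : ℂˣ) ^ (a1 * a2) = x.1 ^ (a1 * a2 - 1) * x.1 ^ 1 := by
            rw [← pow_add, Nat.sub_add_cancel h1]
        _ = x.1 := by rw [hx, one_mul, pow_one]
    rw [this, inv_mul_cancel]⟩
  left_inv p := by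
    obtain ⟨⟨x, y⟩, hp⟩ := p
    exact Subtype.ext (Prod.ext rfl (loopSym_snd_eq hp).symm)
  right_inv x := rfl

theorem loopSymGroup_finite_card (a1 a2 : ℕ) (ha1 : 2 ≤ a1) (ha2 : 2 ≤ a2) :
    Finite (loopSymGroup a1 a2) ∧ Nat.card (loopSymGroup a1 a2) = a1 * a2 - 1 := by
  have hN : NeZero (a1 * a2 - 1) := ⟨by have := Nat.mul_le_mul ha1 ha2; omega⟩
  have e := loopSymEquiv a1 a2 (by have := Nat.mul_le_mul ha1 ha2; omega)
  have hcard : Nat.card (rootsOfUnity (a1 * a2 - 1) ℂ) = a1 * a2 - 1 := by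
    rw [Complex.card_rootsOfUnity]
  refine ⟨Finite.of_equiv _ e.symm, ?_⟩
  rw [Nat.card_congr e, hcard]

end
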